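/- If a is rational with v_3(a) = 0, and the point (x, z/2) with x, z rational is at rational distance from all four vertices (0, ±1/2), (a, ±1/2), then v_3(x) < 0 or v_3(z) < 0. -/

import Mathlib

lemma key3 : ∀ x z a e : ZMod 3, e ≠ 0 → a ≠ 0 →
    IsSquare (4*x^2+(z-e)^2) → IsSquare (4*x^2+(z+e)^2) →
    IsSquare (4*(x-a)^2+(z-e)^2) → IsSquare (4*(x-a)^2+(z+e)^2) → False := by decide

lemma sq_zmod3 (n : ℤ) (r : ℚ) (h : r ^ 2 = (n : ℚ)) : IsSquare ((n : ZMod 3)) := by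
  haveI : Fact (Nat.Prime 3) := ⟨by norm_num⟩
  have hd : ((r.den : ℚ)) ≠ 0 := by exact_mod_cast r.den_ne_zero
  have hnum : (r.num : ℚ) = r * r.den := by
    exact (div_eq_iff hd).mp (Rat.num_div_den r)
  have h2 : (r.num : ℚ) ^ 2 = (n : ℚ) * (r.den : ℚ) ^ 2 := by
    rw [hnum, mul_pow, h]
  have h3 : (r.num) ^ 2 = n * (r.den : ℤ) ^ 2 := by exact_mod_cast h2
  have h4 : ((r.num : ZMod 3)) ^ 2 = (n : ZMod 3) * ((r.den : ℤ) : ZMod 3) ^ 2 := by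
    exact_mod_cast congrArg (Int.cast : ℤ → ZMod 3) h3
  by_cases hden : ((r.den : ℤ) : ZMod 3) = 0
  · exfalso
    have hdvd : (3:ℤ) ∣ (r.den : ℤ) := (ZMod.intCast_zmod_eq_zero_iff_dvd _ 3).mp hden
    have hnum0 : ((r.num : ZMod 3)) = 0 := by
      have : ((r.num : ZMod 3)) ^ 2 = 0 := by rw [h4, hden]; ring
      exact pow_eq_zero_iff (by norm_num) |>.mp this
    have hdvd2 : (3:ℤ) ∣ r.num := (ZMod.intCast_zmod_eq_zero_iff_dvd _ 3).mp hnum0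
    have c := r.reduced
    have : (3:ℕ) ∣ Nat.gcd r.num.natAbs r.den :=
      Nat.dvd_gcd (Int.natAbs_dvd_natAbs.mpr hdvd2) (Int.ofNat_dvd.mp (by exact_mod_cast hdvd))
    rw [c] at this
    omega
  · set N : ZMod 3 := (r.num : ZMod 3) with hN
    set D : ZMod 3 := ((r.den : ℤ) : ZMod 3) with hD
    refine ⟨N * D⁻¹, ?_⟩
    field_simp [hden]
    linear_combination -h4


lemma den_not_dvd (q : ℚ) (h : 0 ≤ padicValRat 3 q) : ¬ (3:ℤ) ∣ (q.den : ℤ) := by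
  intro hdvd
  have hd : (3:ℕ) ∣ q.den := Int.ofNat_dvd.mp (by exact_mod_cast hdvd)
  have hnum : ¬ (3:ℤ) ∣ q.num := by
    intro hn
    have : (3:ℕ) ∣ Nat.gcd q.num.natAbs q.den :=
      Nat.dvd_gcd (Int.natAbs_dvd_natAbs.mpr hn) hd
    rw [q.reduced] at this; omega
  haveI : Fact (Nat.Prime 3) := ⟨by norm_num⟩
  have h1 : padicValInt 3 q.num = 0 := padicValInt.eq_zero_of_not_dvd hnum
  have h2 : 1 ≤ padicValNat 3 q.den := one_le_padicValNat_of_dvd q.den_ne_zero hd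
  rw [padicValRat_def, h1] at h
  omega

lemma num_not_dvd (q : ℚ) (hq : q ≠ 0) (h : padicValRat 3 q = 0) : ¬ (3:ℤ) ∣ q.num := by
  intro hn
  haveI : Fact (Nat.Prime 3) := ⟨by norm_num⟩
  have hden : ¬ (3:ℕ) ∣ q.den := by
    intro hd
    have : (3:ℕ) ∣ Nat.gcd q.num.natAbs q.den :=
      Nat.dvd_gcd (Int.natAbs_dvd_natAbs.mpr hn) hd
    rw [q.reduced] at this; omega
  have h1 : padicValNat 3 q.den = 0 := padicValNat.eq_zero_of_not_dvd hden
  have hnum0 : q.num.natAbs ≠ 0 := by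
    simpa [Int.natAbs_eq_zero] using Rat.num_ne_zero.mpr hq
  have h2 : 1 ≤ padicValInt 3 q.num := by
    unfold padicValInt
    exact one_le_padicValNat_of_dvd hnum0
      (Int.natAbs_dvd_natAbs.mpr hn)
  rw [padicValRat_def, h1] at h
  omega




theorem valuation_neg_of_rational_distance (a x z : ℚ) (ha0 : a ≠ 0)
    (ha : padicValRat 3 a = 0)
    (h1 : ∃ r : ℚ, Real.sqrt ((x : ℝ) ^ 2 + ((z : ℝ) / 2 - 1 / 2) ^ 2) = r)
    (h2 : ∃ r : ℚ, Real.sqrt ((x : ℝ) ^ 2 + ((z : ℝ) / 2 + 1 / 2) ^ 2) = r)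
    (h3 : ∃ r : ℚ, Real.sqrt (((x : ℝ) - a) ^ 2 + ((z : ℝ) / 2 - 1 / 2) ^ 2) = r)
    (h4 : ∃ r : ℚ, Real.sqrt (((x : ℝ) - a) ^ 2 + ((z : ℝ) / 2 + 1 / 2) ^ 2) = r) :
    padicValRat 3 x < 0 ∨ padicValRat 3 z < 0 := by
  by_contra hcon
  push_neg at hcon
  obtain ⟨hx, hz⟩ := hcon
  have hp3 : Prime (3:ℤ) := Int.prime_three
  have hxd : ¬ (3:ℤ) ∣ (x.den : ℤ) := den_not_dvd x hx
  have hzd : ¬ (3:ℤ) ∣ (z.den : ℤ) := den_not_dvd z hz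
  have had : ¬ (3:ℤ) ∣ (a.den : ℤ) := den_not_dvd a (le_of_eq ha.symm)
  have han : ¬ (3:ℤ) ∣ a.num := num_not_dvd a ha0 ha
  set d : ℤ := (x.den : ℤ) * z.den * a.den with hd_def
  have hd3 : ¬ (3:ℤ) ∣ d := by
    intro h
    rcases hp3.dvd_mul.mp h with h' | h'
    · rcases hp3.dvd_mul.mp h' with h'' | h''
      exacts [hxd h'', hzd h'']
    · exact had h'
  set X : ℤ := x.num * ((z.den : ℤ) * a.den) with hX_def
  set Z : ℤ := z.num * ((x.den : ℤ) * a.den) with hZ_def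
  set A : ℤ := a.num * ((x.den : ℤ) * z.den) with hA_def
  have hxn : (x.num : ℚ) = x * x.den :=
    (div_eq_iff (by exact_mod_cast x.den_nz)).mp (Rat.num_div_den x)
  have hzn : (z.num : ℚ) = z * z.den :=
    (div_eq_iff (by exact_mod_cast z.den_nz)).mp (Rat.num_div_den z)
  have han' : (a.num : ℚ) = a * a.den :=
    (div_eq_iff (by exact_mod_cast a.den_nz)).mp (Rat.num_div_den a)
  have hX : (X : ℚ) = x * d := by
    push_cast [hX_def, hd_def]
    linear_combination ((z.den:ℚ) * a.den) * hxn
  have hZ : (Z : ℚ) = z * d := by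
    push_cast [hZ_def, hd_def]
    linear_combination ((x.den:ℚ) * a.den) * hzn
  have hA : (A : ℚ) = a * d := by
    push_cast [hA_def, hd_def]
    linear_combination ((x.den:ℚ) * z.den) * han'
  have hA3 : ¬ (3:ℤ) ∣ A := by
    intro h
    rcases hp3.dvd_mul.mp h with h' | h'
    · exact han h'
    · rcases hp3.dvd_mul.mp h' with h'' | h''
      exacts [hxd h'', hzd h'']
  -- extract rational equations
  obtain ⟨r1, hr1⟩ := h1
  obtain ⟨r2, hr2⟩ := h2
  obtain ⟨r3, hr3⟩ := h3
  obtain ⟨r4, hr4⟩ := h4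
  have e1 : (r1:ℝ)^2 = (x : ℝ) ^ 2 + ((z : ℝ) / 2 - 1 / 2) ^ 2 := by
    rw [← hr1]; exact Real.sq_sqrt (by positivity)
  have e2 : (r2:ℝ)^2 = (x : ℝ) ^ 2 + ((z : ℝ) / 2 + 1 / 2) ^ 2 := by
    rw [← hr2]; exact Real.sq_sqrt (by positivity)
  have e3 : (r3:ℝ)^2 = ((x : ℝ) - a) ^ 2 + ((z : ℝ) / 2 - 1 / 2) ^ 2 := by
    rw [← hr3]; exact Real.sq_sqrt (by positivity)
  have e4 : (r4:ℝ)^2 = ((x : ℝ) - a) ^ 2 + ((z : ℝ) / 2 + 1 / 2) ^ 2 := by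
    rw [← hr4]; exact Real.sq_sqrt (by positivity)
  have q1 : r1 ^ 2 = x ^ 2 + (z/2 - 1/2) ^ 2 := by
    have h' : ((r1^2 : ℚ) : ℝ) = ((x ^ 2 + (z/2 - 1/2)^2 : ℚ) : ℝ) := by
      push_cast
      linarith [e1]
    exact_mod_cast h'
  have q2 : r2 ^ 2 = x ^ 2 + (z/2 + 1/2) ^ 2 := by
    have h' : ((r2^2 : ℚ) : ℝ) = ((x ^ 2 + (z/2 + 1/2)^2 : ℚ) : ℝ) := by
      push_cast
      linarith [e2]
    exact_mod_cast h'
  have q3 : r3 ^ 2 = (x - a) ^ 2 + (z/2 - 1/2) ^ 2 := by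
    have h' : ((r3^2 : ℚ) : ℝ) = (((x - a) ^ 2 + (z/2 - 1/2)^2 : ℚ) : ℝ) := by
      push_cast
      linarith [e3]
    exact_mod_cast h'
  have q4 : r4 ^ 2 = (x - a) ^ 2 + (z/2 + 1/2) ^ 2 := by
    have h' : ((r4^2 : ℚ) : ℝ) = (((x - a) ^ 2 + (z/2 + 1/2)^2 : ℚ) : ℝ) := by
      push_cast
      linarith [e4]
    exact_mod_cast h'
  have s1 : IsSquare (((4*X^2 + (Z-d)^2 : ℤ) : ZMod 3)) := by
    apply sq_zmod3 _ (2 * (d:ℚ) * r1)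
    push_cast
    linear_combination (4*(d:ℚ)^2) * q1 - (4*((X:ℚ) + x*(d:ℚ))) * hX
      - (((Z:ℚ) + z*(d:ℚ) - 2*(d:ℚ))) * hZ
  have s2 : IsSquare (((4*X^2 + (Z+d)^2 : ℤ) : ZMod 3)) := by
    apply sq_zmod3 _ (2 * (d:ℚ) * r2)
    push_cast
    linear_combination (4*(d:ℚ)^2) * q2 - (4*((X:ℚ) + x*(d:ℚ))) * hX
      - (((Z:ℚ) + z*(d:ℚ) + 2*(d:ℚ))) * hZ
  have s3 : IsSquare (((4*(X-A)^2 + (Z-d)^2 : ℤ) : ZMod 3)) := by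
    apply sq_zmod3 _ (2 * (d:ℚ) * r3)
    push_cast
    linear_combination (4*(d:ℚ)^2) * q3
      - (4*((X:ℚ) - (A:ℚ) + (x-a)*(d:ℚ))) * (hX - hA)
      - (((Z:ℚ) + z*(d:ℚ) - 2*(d:ℚ))) * hZ
  have s4 : IsSquare (((4*(X-A)^2 + (Z+d)^2 : ℤ) : ZMod 3)) := by
    apply sq_zmod3 _ (2 * (d:ℚ) * r4)
    push_cast
    linear_combination (4*(d:ℚ)^2) * q4
      - (4*((X:ℚ) - (A:ℚ) + (x-a)*(d:ℚ))) * (hX - hA)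
      - (((Z:ℚ) + z*(d:ℚ) + 2*(d:ℚ))) * hZ
  push_cast at s1 s2 s3 s4
  refine key3 (X : ZMod 3) (Z : ZMod 3) (A : ZMod 3) (d : ZMod 3) ?_ ?_ s1 s2 s3 s4
  · intro h; exact hd3 ((ZMod.intCast_zmod_eq_zero_iff_dvd d 3).mp h)
  · intro h; exact hA3 ((ZMod.intCast_zmod_eq_zero_iff_dvd A 3).mp h)
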